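/- The diagonal term (product of main-diagonal entries) of any maximal minor [a_1,…,a_t | columns] of the Hankel matrix H_t is the unique term of that minor that is largest with respect to the degree lexicographic order induced by x_1 > x_2 > ⋯ > x_n; that is, degree lexicographic order is a diagonal term order for Hankel matrices. -/

import Mathlib

open MvPolynomial

noncomputable section

/-- Total degree of an exponent vector. -/
def expDeg (u : ℕ →₀ ℕ) : ℕ := u.sum fun _ e => e

/-- Degree lexicographic order induced by `x_1 > x_2 > ⋯` :
`DegLexLt u v` means the monomial with exponent `u` is strictly smaller than
the one with exponent `v`. -/
def DegLexLt (u v : ℕ →₀ ℕ) : Prop :=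
  expDeg u < expDeg v ∨ (expDeg u = expDeg v ∧ toLex u < toLex v)

/-- `u` is the exponent vector of the (unique, strictly largest) leading term of `f`
with respect to degree lexicographic order. -/
def IsLeadMono {K : Type*} [CommRing K] (f : MvPolynomial ℕ K) (u : ℕ →₀ ℕ) : Prop :=
  u ∈ f.support ∧ ∀ v ∈ f.support, v ≠ u → DegLexLt v u

/-- The initial ideal of `I` : the ideal generated by the leading monomials of
elements of `I`. -/
def initialIdeal {K : Type*} [CommRing K] (I : Ideal (MvPolynomial ℕ K)) :
    Ideal (MvPolynomial ℕ K) :=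
  Ideal.span {m | ∃ f ∈ I, ∃ u, IsLeadMono f u ∧ m = monomial u (1 : K)}

/-- `a 1, …, a r` is a chain (1-indexed strictly increasing sequence with gaps ≥ 2). -/
def IsChainOn (r : ℕ) (a : ℕ → ℕ) : Prop := ∀ i, 1 ≤ i → i < r → a i + 1 < a (i + 1)

/-- Exponent vector of the monomial `x_{a 1} ⋯ x_{a r}`. -/
def chainExp (r : ℕ) (a : ℕ → ℕ) : ℕ →₀ ℕ := ∑ i ∈ Finset.Icc 1 r, Finsupp.single (a i) 1

/-- The maximal minor of a Hankel matrix whose main diagonal is `x_{a 1}, …, x_{a r}`;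
its (i,j) entry (0-indexed) is `x_{a (j+1) + i - j}`. -/
def minorOfChain (K : Type*) [CommRing K] (r : ℕ) (a : ℕ → ℕ) : MvPolynomial ℕ K :=
  (Matrix.of fun i j : Fin r =>
    (X (a ((j : ℕ) + 1) + (i : ℕ) - (j : ℕ)) : MvPolynomial ℕ K)).det

/-- The chain `a` is the diagonal chain of a maximal minor of the Hankel matrix with
`r` rows built from the variables `x_lo, …, x_hi`. -/
def FitsHankel (lo hi r : ℕ) (a : ℕ → ℕ) : Prop :=
  IsChainOn r a ∧ ∀ j, 1 ≤ j → j ≤ r → lo + (j - 1) ≤ a j ∧ a j + (r - j) ≤ hi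

/-- The ideal of maximal minors of the Hankel matrix with `r` rows on `x_lo, …, x_hi`. -/
def hankelIdeal (K : Type*) [CommRing K] (lo hi r : ℕ) : Ideal (MvPolynomial ℕ K) :=
  Ideal.span {f | ∃ a : ℕ → ℕ, FitsHankel lo hi r a ∧ f = minorOfChain K r a}

/-- `Interval(a) = ⋃_{2 ≤ i ≤ r} {a_i - 1, a_i}`. -/
def IntervalOf (r : ℕ) (a : ℕ → ℕ) : Set ℕ :=
  {x | ∃ i, 2 ≤ i ∧ i ≤ r ∧ (x = a i - 1 ∨ x = a i)}

/- Control functions with Δ = 0. -/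
def omegaD (r s : ℕ) : ℕ := if r < s then r else s - 1
def omegaC (r s : ℕ) : ℕ := if r ≤ s then r else s
def omegaAD (r s : ℕ) : ℕ := if r ≤ s then r - 1 else s

/-- The three standard-form conditions for a pair of chains, with bounds
`d = Ω_d`, `c = Ω_c`, `ad = Ω_ad`. -/
def StdPairCond (d c ad r s : ℕ) (a b : ℕ → ℕ) : Prop :=
  ((∀ i, 1 ≤ i → i ≤ d → a i ≤ b (i + 1)) ∨
    (∃ h, 1 ≤ h ∧ h ≤ d ∧ b (h + 1) < a h ∧
      ∀ i, h ≤ i → i ≤ d → a i ∈ IntervalOf s b)) ∧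
  ((∀ i, 1 ≤ i → i ≤ c → a i ≤ b i) ∨
    (∃ h, 1 ≤ h ∧ h ≤ c ∧ b h < a h ∧
      ∀ i, h ≤ i → i ≤ c → a i ∈ IntervalOf s b)) ∧
  ((∀ i, 1 ≤ i → i ≤ ad → b i ≤ a (i + 1)) ∨
    (∃ h, 1 ≤ h ∧ h ≤ ad ∧ a (h + 1) < b h ∧
      ∀ i, h ≤ i → i ≤ ad → b i ∈ IntervalOf r a))

/-- Standard form for a pair of (unlabeled) chains, with Δ = 0. -/
def StdPair (r s : ℕ) (a b : ℕ → ℕ) : Prop :=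
  StdPairCond (omegaD r s) (omegaC r s) (omegaAD r s) r s a b

def HasDiagRel (r s : ℕ) (a b : ℕ → ℕ) : Prop :=
  ∃ h k, 1 ≤ h ∧ h ≤ omegaD r s ∧ h + 1 ≤ k ∧ k ≤ s ∧ b k < a h ∧ a h ∉ IntervalOf s b

def HasColRel (r s : ℕ) (a b : ℕ → ℕ) : Prop :=
  ∃ h, 1 ≤ h ∧ h ≤ omegaC r s ∧ b h < a h ∧ a h ∉ IntervalOf s b

def HasADRel (r s : ℕ) (a b : ℕ → ℕ) : Prop :=
  ∃ h k, 1 ≤ h ∧ h ≤ omegaAD r s ∧ h + 1 ≤ k ∧ k ≤ r ∧ a k < b h ∧ b h ∉ IntervalOf r a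

/-- A diagonal relation move (swap of a block of entries), with Ω_d bound `d`. -/
def DiagMoveP (d s : ℕ) (a b a' b' : ℕ → ℕ) : Prop :=
  ∃ h k v, 1 ≤ h ∧ h ≤ d ∧ h + 1 ≤ k ∧ k ≤ s ∧ b k < a h ∧ a h ∉ IntervalOf s b ∧
    v ≤ h - 1 ∧ (∀ i, i ≤ v → b (k - i) < a (h - i)) ∧
    (v ≠ h - 1 → a (h - v - 1) ≤ b (k - v - 1)) ∧
    (∀ i, a' i = if h - v ≤ i ∧ i ≤ h then b (i + k - h) else a i) ∧
    (∀ i, b' i = if k - v ≤ i ∧ i ≤ k then a (i + h - k) else b i)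

/-- A column-wise relation move, with Ω_c bound `c`. -/
def ColMoveP (c s : ℕ) (a b a' b' : ℕ → ℕ) : Prop :=
  ∃ h v, 1 ≤ h ∧ h ≤ c ∧ b h < a h ∧ a h ∉ IntervalOf s b ∧
    v ≤ h - 1 ∧ (∀ i, i ≤ v → b (h - i) < a (h - i)) ∧
    (v ≠ h - 1 → a (h - v - 1) ≤ b (h - v - 1)) ∧
    (∀ i, a' i = if h - v ≤ i ∧ i ≤ h then b i else a i) ∧
    (∀ i, b' i = if h - v ≤ i ∧ i ≤ h then a i else b i)

/-- An anti-diagonal relation move, with Ω_ad bound `ad`. -/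
def ADMoveP (ad r : ℕ) (a b a' b' : ℕ → ℕ) : Prop :=
  ∃ h k v, 1 ≤ h ∧ h ≤ ad ∧ h + 1 ≤ k ∧ k ≤ r ∧ a k < b h ∧ b h ∉ IntervalOf r a ∧
    v ≤ h - 1 ∧ (∀ i, i ≤ v → a (k - i) < b (h - i)) ∧
    (v ≠ h - 1 → b (h - v - 1) ≤ a (k - v - 1)) ∧
    (∀ i, a' i = if k - v ≤ i ∧ i ≤ k then b (i + h - k) else a i) ∧
    (∀ i, b' i = if h - v ≤ i ∧ i ≤ h then a (i + k - h) else b i)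

/-- A relation move on a pair of (unlabeled) chains (Δ = 0). -/
def Move (r s : ℕ) (a b a' b' : ℕ → ℕ) : Prop :=
  DiagMoveP (omegaD r s) s a b a' b' ∨ ColMoveP (omegaC r s) s a b a' b' ∨
    ADMoveP (omegaAD r s) r a b a' b'

/- Labels and labeled chains, for the family of close cuts. -/
def IsLabel (n : ℕ) (σ : ℕ × ℕ) : Prop :=
  σ = (1, n) ∨ σ = (1, n - 1) ∨ σ = (2, n) ∨ σ = (2, n - 1)

def LabeledChain (n : ℕ) (σ : ℕ × ℕ) (r : ℕ) (a : ℕ → ℕ) : Prop :=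
  IsLabel n σ ∧ 1 ≤ r ∧ FitsHankel σ.1 σ.2 r a

/-- Order of labels: (1,n-1) > (1,n) > (2,n-1) > (2,n). -/
def labelRank (n : ℕ) (σ : ℕ × ℕ) : ℕ :=
  if σ = (1, n - 1) then 3 else if σ = (1, n) then 2 else if σ = (2, n - 1) then 1 else 0

/-- `(σ,a) ≥_c (γ,b)`. -/
def GeC (n : ℕ) (σ : ℕ × ℕ) (r : ℕ) (a : ℕ → ℕ) (γ : ℕ × ℕ) (s : ℕ) (b : ℕ → ℕ) : Prop :=
  labelRank n γ < labelRank n σ ∨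
    (σ = γ ∧ (chainExp s b = chainExp r a ∨ DegLexLt (chainExp s b) (chainExp r a)))

/-- The function Δ for a pair of labeled chains. -/
def delta (n : ℕ) (σ γ : ℕ × ℕ) (r s : ℕ) (a b : ℕ → ℕ) : ℕ :=
  if (r ≤ s ∧ a r = n ∧ γ.2 = n - 1) ∨ (s < r ∧ b s = n ∧ σ.2 = n - 1) then 1 else 0

def omegaD' (Δ r s : ℕ) : ℕ := if r < s then r - Δ else s - 1
def omegaC' (Δ r s : ℕ) : ℕ := if r ≤ s then r - Δ else s
def omegaAD' (Δ r s : ℕ) : ℕ := if r ≤ s then r - 1 else s - Δ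

/-- Standard form for a pair of labeled chains `(σ,a) ≥_c (γ,b)`. -/
def StdPairL (n : ℕ) (σ γ : ℕ × ℕ) (r s : ℕ) (a b : ℕ → ℕ) : Prop :=
  StdPairCond (omegaD' (delta n σ γ r s a b) r s) (omegaC' (delta n σ γ r s a b) r s)
    (omegaAD' (delta n σ γ r s a b) r s) r s a b

/-- A relation move on a pair of labeled chains (Δ as prescribed by the labels). -/
def MoveL (n : ℕ) (σ γ : ℕ × ℕ) (r s : ℕ) (a b a' b' : ℕ → ℕ) : Prop :=
  DiagMoveP (omegaD' (delta n σ γ r s a b) r s) s a b a' b' ∨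
  ColMoveP (omegaC' (delta n σ γ r s a b) r s) s a b a' b' ∨
  ADMoveP (omegaAD' (delta n σ γ r s a b) r s) r a b a' b'

/-- A tabel with `l` rows: row `i` (1 ≤ i ≤ l) is the labeled chain
`(lab i, ent i)` of length `len i`, and the rows are ordered decreasingly by `≥_c`. -/
def IsTabel (n l : ℕ) (lab : ℕ → ℕ × ℕ) (len : ℕ → ℕ) (ent : ℕ → ℕ → ℕ) : Prop :=
  (∀ i, 1 ≤ i → i ≤ l → LabeledChain n (lab i) (len i) (ent i)) ∧
  (∀ i, 1 ≤ i → i < l →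
    GeC n (lab i) (len i) (ent i) (lab (i + 1)) (len (i + 1)) (ent (i + 1)))

/-- A tabel is a standard form: the standard-form conditions hold for each
pair of rows `i < j`. -/
def StdTabel (n l : ℕ) (lab : ℕ → ℕ × ℕ) (len : ℕ → ℕ) (ent : ℕ → ℕ → ℕ) : Prop :=
  ∀ i j, 1 ≤ i → i < j → j ≤ l →
    StdPairL n (lab i) (lab j) (len i) (len j) (ent i) (ent j)

/-- Standardness of a quadratic factor `x_i · z_{σ,a}` (condition (ii) of the
standard-monomial construction). -/
def XZStd (i : ℕ) (σ : ℕ × ℕ) (r : ℕ) (a : ℕ → ℕ) : Prop :=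
  i ≤ a 1 ∨ (a 1 < i ∧ (σ.2 < i ∨ i ∈ IntervalOf r a))

/-- the diagonal term of any maximal minor of the Hankel matrix `H_t`
is the unique largest term w.r.t. degree lexicographic order (deg-lex is a diagonal
term order for Hankel matrices). -/





lemma aux_gap (t : ℕ) (a : ℕ → ℕ) (hch : ∀ i, 1 ≤ i → i < t → a i + 2 ≤ a (i + 1)) :
    ∀ d i, 1 ≤ i → i + d ≤ t → a i + 2 * d ≤ a (i + d) := by
  intro d
  induction d with
  | zero => simp
  | succ d ih =>
      intro i h1 h2
      have h3 := ih i h1 (by omega)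
      have h4 := hch (i + d) (by omega) (by omega)
      have : i + (d + 1) = (i + d) + 1 := rfl
      rw [this]
      omega

lemma aux_lex_lt (t : ℕ) (a : ℕ → ℕ)
    (hlo : ∀ j, 1 ≤ j → j ≤ t → j ≤ a j)
    (hch : ∀ i, 1 ≤ i → i < t → a i + 2 ≤ a (i + 1))
    (σ : Equiv.Perm (Fin t)) (hσ : σ ≠ 1) :
    toLex (∑ j : Fin t, Finsupp.single (a ((j : ℕ) + 1) + ((σ j : ℕ)) - (j : ℕ)) 1)
      < toLex (∑ j : Fin t, Finsupp.single (a ((j : ℕ) + 1)) 1) := by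
  classical
  -- the set of non-fixed points
  have hne : ∃ j : Fin t, σ j ≠ j := by
    by_contra h
    push_neg at h
    exact hσ (Equiv.ext h)
  set S : Finset (Fin t) := Finset.univ.filter (fun j => σ j ≠ j) with hS
  have hSne : S.Nonempty := ⟨hne.choose, by simp [hS, hne.choose_spec]⟩
  set j0 : Fin t := S.min' hSne with hj0
  have hj0mem : σ j0 ≠ j0 := by
    have := S.min'_mem hSne
    simpa [hS] using this
  have hfix : ∀ j : Fin t, j < j0 → σ j = j := by
    intro j hj
    by_contra h
    have : j0 ≤ j := S.min'_le j (by simp [hS, h])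
    exact absurd hj (not_lt.mpr this)
  have hge : ∀ j : Fin t, j0 ≤ j → j0 ≤ σ j := by
    intro j hj
    by_contra h
    push_neg at h
    have h1 : σ (σ j) = σ j := hfix _ h
    have h2 : σ j = j := σ.injective h1
    rw [h2] at h
    exact absurd hj (not_le.mpr h)
  -- basic numeric facts
  have hj0t : (j0 : ℕ) < t := j0.isLt
  clear_value j0
  set m0 : ℕ := a ((j0 : ℕ) + 1) with hm0
  clear_value m0
  -- index of column j in the term of σ
  have key_lt : ∀ j : Fin t, (j : ℕ) < (j0 : ℕ) → a ((j : ℕ) + 1) < m0 := by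
    intro j hj
    have := aux_gap t a hch ((j0:ℕ) - (j:ℕ)) ((j:ℕ)+1) (by omega) (by omega)
    rw [show (j:ℕ)+1+((j0:ℕ)-(j:ℕ)) = (j0:ℕ)+1 by omega] at this
    omega
  have key_gt : ∀ j : Fin t, (j0 : ℕ) ≤ (j : ℕ) →
      m0 < a ((j : ℕ) + 1) + ((σ j : ℕ)) - (j : ℕ) := by
    intro j hj
    have hlo1 : (j:ℕ)+1 ≤ a ((j:ℕ)+1) := hlo ((j:ℕ)+1) (by omega) (by omega)
    have hσj : (j0:ℕ) ≤ ((σ j : ℕ)) := hge j (by exact_mod_cast hj)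
    rcases eq_or_lt_of_le hj with heq | hlt
    · -- j = j0, σ j ≠ j so σ j > j0
      have hj' : j = j0 := Fin.ext heq.symm
      subst hj'
      have : ((j:ℕ)) < ((σ j : ℕ)) := by
        rcases lt_or_eq_of_le hσj with h | h
        · exact h
        · exfalso; exact hj0mem (Fin.ext h.symm)
      omega
    · have := aux_gap t a hch ((j:ℕ) - (j0:ℕ)) ((j0:ℕ)+1) (by omega) (by omega)
      rw [show (j0:ℕ)+1+((j:ℕ)-(j0:ℕ)) = (j:ℕ)+1 by omega] at this
      omega
  -- now the lex comparison
  show Finsupp.Lex (· < ·) (· < ·) _ _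
  rw [Finsupp.lex_def]
  simp only [ofLex_toLex]
  refine ⟨m0, ?_, ?_⟩
  · intro k hk
    rw [Finsupp.finset_sum_apply, Finsupp.finset_sum_apply]
    refine Finset.sum_congr rfl ?_
    intro j _
    rcases lt_or_ge (j : ℕ) (j0 : ℕ) with hj | hj
    · have h1 : σ j = j := hfix j (by exact_mod_cast hj)
      have h2 : a ((j:ℕ)+1) + ((σ j : ℕ)) - (j:ℕ) = a ((j:ℕ)+1) := by rw [h1]; omega
      rw [h2]
    · have h1 := key_gt j hj
      have h2 : m0 ≤ a ((j:ℕ)+1) := by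
        rcases eq_or_lt_of_le hj with heq | hlt
        · rw [show (j:ℕ) = (j0:ℕ) from heq.symm]; omega
        · have := aux_gap t a hch ((j:ℕ) - (j0:ℕ)) ((j0:ℕ)+1) (by omega) (by omega)
          rw [show (j0:ℕ)+1+((j:ℕ)-(j0:ℕ)) = (j:ℕ)+1 by omega] at this
          omega
      rw [Finsupp.single_apply, Finsupp.single_apply, if_neg (by omega), if_neg (by omega)]
  · rw [Finsupp.finset_sum_apply, Finsupp.finset_sum_apply]
    have hL : ∑ j : Fin t, (Finsupp.single (a ((j:ℕ)+1) + ((σ j : ℕ)) - (j:ℕ)) 1) m0 = 0 := by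
      refine Finset.sum_eq_zero ?_
      intro j _
      rcases lt_or_ge (j : ℕ) (j0 : ℕ) with hj | hj
      · have h1 : σ j = j := hfix j (by exact_mod_cast hj)
        have h2 := key_lt j hj
        rw [h1, Finsupp.single_apply, if_neg (by omega)]
      · have h1 := key_gt j hj
        rw [Finsupp.single_apply, if_neg (by omega)]
    rw [hL]
    have : (0:ℕ) < ∑ j : Fin t, (Finsupp.single (a ((j:ℕ)+1)) 1) m0 := by
      refine Finset.sum_pos' (fun _ _ => Nat.zero_le _) ⟨j0, Finset.mem_univ _, ?_⟩
      rw [Finsupp.single_apply, if_pos hm0.symm]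
      omega
    exact this

lemma aux_prodX {K : Type*} [CommRing K] {ι : Type*} (s : Finset ι) (c : ι → ℕ) :
    (∏ i ∈ s, (X (c i) : MvPolynomial ℕ K)) =
      monomial (∑ i ∈ s, Finsupp.single (c i) 1) 1 := by
  induction s using Finset.cons_induction with
  | empty => simp
  | cons i s hi ih =>
      rw [Finset.prod_cons, ih, Finset.sum_cons, X, monomial_mul, one_mul]

lemma aux_expDeg_add (u v : ℕ →₀ ℕ) : expDeg (u + v) = expDeg u + expDeg v := by
  unfold expDeg
  exact Finsupp.sum_add_index' (by simp) (by intros; rfl)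

lemma aux_expDeg_sum {ι : Type*} (s : Finset ι) (c : ι → ℕ) :
    expDeg (∑ i ∈ s, Finsupp.single (c i) 1) = s.card := by
  induction s using Finset.cons_induction with
  | empty => simp [expDeg]
  | cons i s hi ih =>
      rw [Finset.sum_cons, Finset.card_cons, aux_expDeg_add, ih, expDeg,
        Finsupp.sum_single_index rfl]
      omega


theorem stmt2 {K : Type*} [Field K] (n t : ℕ) (ht : 1 ≤ t) (htn : t ≤ (n + 1) / 2)
    (a : ℕ → ℕ) (hfit : FitsHankel 1 n t a) :
    IsLeadMono (minorOfChain K t a) (chainExp t a) := by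
  classical
  obtain ⟨hchain, hbnd⟩ := hfit
  have hlo : ∀ j, 1 ≤ j → j ≤ t → j ≤ a j := by
    intro j h1 h2
    have := (hbnd j h1 h2).1
    omega
  have hch : ∀ i, 1 ≤ i → i < t → a i + 2 ≤ a (i + 1) := by
    intro i h1 h2
    have := hchain i h1 h2
    omega
  -- the exponent vector associated to a permutation
  set E : Equiv.Perm (Fin t) → (ℕ →₀ ℕ) :=
    fun σ => ∑ j : Fin t, Finsupp.single (a ((j : ℕ) + 1) + ((σ j : ℕ)) - (j : ℕ)) 1 with hE
  have hE1' : E 1 = ∑ j : Fin t, Finsupp.single (a ((j : ℕ) + 1)) 1 := by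
    rw [hE]
    simp only [Equiv.Perm.one_apply]
    exact Finset.sum_congr rfl (fun j _ => by congr 1; omega)
  have hE1 : E 1 = chainExp t a := by
    rw [hE1', chainExp]
    have himg : Finset.Icc 1 t = Finset.image (fun k => k + 1) (Finset.range t) := by
      ext x
      simp only [Finset.mem_Icc, Finset.mem_image, Finset.mem_range]
      constructor
      · intro hx; exact ⟨x - 1, by omega, by omega⟩
      · rintro ⟨k, hk, rfl⟩; omega
    rw [himg, Finset.sum_image (by intro x _ y _ h; simp only at h; omega)]
    rw [Fin.sum_univ_eq_sum_range (fun j => Finsupp.single (a (j + 1)) 1)]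
  have hlex : ∀ σ : Equiv.Perm (Fin t), σ ≠ 1 → toLex (E σ) < toLex (E 1) := by
    intro σ hσ
    rw [hE1']
    exact aux_lex_lt t a hlo hch σ hσ
  have hdet : minorOfChain K t a =
      ∑ σ : Equiv.Perm (Fin t), Equiv.Perm.sign σ • monomial (E σ) (1 : K) := by
    rw [minorOfChain, Matrix.det_apply]
    refine Finset.sum_congr rfl ?_
    intro σ _
    congr 1
    simp only [Matrix.of_apply]
    exact aux_prodX Finset.univ _
  have hcoeff : ∀ u, coeff u (minorOfChain K t a) =
      ∑ σ : Equiv.Perm (Fin t), Equiv.Perm.sign σ • (if E σ = u then (1:K) else 0) := by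
    intro u
    rw [hdet, coeff_sum]
    refine Finset.sum_congr rfl ?_
    intro σ _
    rw [coeff_smul, coeff_monomial]
  have hc1 : coeff (chainExp t a) (minorOfChain K t a) = 1 := by
    rw [hcoeff]
    rw [Finset.sum_eq_single_of_mem 1 (Finset.mem_univ _)]
    · rw [if_pos hE1]
      simp
    · intro σ _ hσ
      have hne : E σ ≠ chainExp t a := by
        rw [← hE1]
        intro h
        exact absurd (congrArg toLex h) (ne_of_lt (hlex σ hσ))
      rw [if_neg hne, smul_zero]
  constructor
  · rw [mem_support_iff, hc1]
    exact one_ne_zero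
  · intro v hv hvne
    have hv' : coeff v (minorOfChain K t a) ≠ 0 := mem_support_iff.mp hv
    have hex : ∃ σ : Equiv.Perm (Fin t), E σ = v := by
      by_contra h
      push_neg at h
      apply hv'
      rw [hcoeff]
      refine Finset.sum_eq_zero ?_
      intro σ _
      rw [if_neg (h σ), smul_zero]
    obtain ⟨σ, rfl⟩ := hex
    have hσ1 : σ ≠ 1 := by
      intro h
      rw [h, hE1] at hvne
      exact hvne rfl
    refine Or.inr ⟨?_, ?_⟩
    · rw [← hE1, hE]
      simp only [aux_expDeg_sum]
    · rw [← hE1]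
      exact hlex σ hσ1


end
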